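/- (Image of the hyperelliptic parametrization lies in the determinantal hyperelliptic locus.) Substituting a_{i,j} = A_{ij} into the 4×6 matrix a = [[a_{0,1}, a_{0,2}, 0, a_{0,3}, 0, 0], [a_{1,0}, 0, a_{1,2}, 0, a_{1,3}, 0], [0, a_{2,0}, a_{2,1}, 0, 0, a_{2,3}], [0, 0, 0, a_{3,0}, a_{3,1}, a_{3,2}]] yields a 4×6 matrix over ℚ[v_0,v_1,w_0,w_1,x_0,x_1,y_0,y_1,z_0,z_1] all of whose 4×4 minors are the zero polynomial (i.e., the matrix has rank ≤ 3 identically on the image of φ). -/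
import Mathlib


open MvPolynomial

noncomputable section

/- Variable indices in `Fin 10` for the parameter space:
0:v₀ 1:v₁ 2:w₀ 3:w₁ 4:x₀ 5:x₁ 6:y₀ 7:y₁ 8:z₀ 9:z₁ -/

abbrev T : Type := MvPolynomial (Fin 10) ℚ

def v0 : T := X 0
def v1 : T := X 1
def w0 : T := X 2
def w1 : T := X 3
def x0 : T := X 4
def x1 : T := X 5
def y0 : T := X 6
def y1 : T := X 7
def z0 : T := X 8
def z1 : T := X 9

def A32 : T := v0^2 * (x1*w1 - x0*w0) * x1 * (x1 + x0) * y0 * y1 * z1^2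
def A31 : T := v0^2 * (x1*w1 - x0*w0) * x0 * (x1 + x0) * y0 * y1 * z0^2
def A30 : T := -v1^2 * w0^2 * w1^2 * (w1 + w0) * x0 * x1 * (x1 + x0) * y0 * y1 * z1^2
def A23 : T := -v0^2 * (x1*w1 - x0*w0) * x0 * x1 * y0^2 * z1^2
def A21 : T := -v0^2 * (x1*w1 - x0*w0) * x0 * (x1 + x0) * y1^2 * z0^2
def A20 : T := v1^2 * w0^2 * w1 * (w1 + w0)^2 * x0 * x1 * (x1 + x0) * y1^2 * z1^2
def A13 : T := -v0^2 * (x1*w1 - x0*w0) * x0 * x1 * y0^2 * z0 * z1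
def A12 : T := v0^2 * (x1*w1 - x0*w0) * x1 * (x1 + x0) * y1^2 * z0 * z1
def A10 : T := -v1^2 * w0 * w1^2 * (w1 + w0)^2 * x0 * x1 * (x1 + x0) * y1^2 * z0 * z1
def A03 : T := -v0 * v1 * w0 * w1 * (x1*w1 - x0*w0) * x0 * x1 * y0^2 * z1^2
def A02 : T := v0 * v1 * w0 * (w1 + w0) * (x1*w1 - x0*w0) * x1 * (x1 + x0) * y1^2 * z1^2
def A01 : T := -v0 * v1 * w1 * (w1 + w0) * (x1*w1 - x0*w0) * x0 * (x1 + x0) * y1^2 * z0^2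

/-- The 4×6 `a`-matrix with the coordinates of the hyperelliptic
parametrization `φ` substituted for the variables `a_{i,j}`. -/
def aMat : Matrix (Fin 4) (Fin 6) T :=
  ![![A01, A02, 0, A03, 0, 0],
    ![A10, 0, A12, 0, A13, 0],
    ![0, A20, A21, 0, 0, A23],
    ![0, 0, 0, A30, A31, A32]]

def u0 : T := v1*w0*w1*(w1+w0)*x0*x1*(x1+x0)*y1*z1
def u1 : T := -(v0*(x1*w1 - x0*w0)*x0*(x1+x0)*y1*z0)
def u2 : T := -(v0*(x1*w1 - x0*w0)*x1*(x1+x0)*y1*z1)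
def u3 : T := -(v0*(x1*w1 - x0*w0)*x0*x1*y0*z1)

/-- A vector in the left kernel of `aMat`. -/
def uVec : Fin 4 → T := ![u0, u1, u2, u3]

lemma key : ∀ k : Fin 6,
    u0 * aMat 0 k + u1 * aMat 1 k + u2 * aMat 2 k + u3 * aMat 3 k = 0 := by
  simp only [Fin.forall_fin_succ, IsEmpty.forall_iff, and_true, aMat,
    Matrix.cons_val_zero, Matrix.cons_val_one, Matrix.head_cons,
    Matrix.cons_val_succ, Matrix.cons_val_two, Matrix.cons_val_three,
    Matrix.tail_cons]
  refine ⟨?_, ?_, ?_, ?_, ?_, ?_⟩ <;>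
    · simp only [u0, u1, u2, u3, A01, A02, A03, A10, A12, A13, A20, A21, A23,
        A30, A31, A32, v0, v1, w0, w1, x0, x1, y0, y1, z0, z1]
      ring

lemma uVec_zero_ne : uVec 0 ≠ 0 := by
  intro h
  have h2 := congrArg (eval (fun _ => (1:ℚ))) h
  simp only [uVec, Matrix.cons_val_zero, u0, v1, w0, w1, x0, x1, y1, z1,
    map_mul, map_add, eval_X, map_zero] at h2
  norm_num at h2

/-- All 4×4 minors of the substituted `a`-matrix vanish identically, i.e.
the `a`-matrix has rank ≤ 3 on the image of the parametrization `φ` of the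
hyperelliptic locus. -/
theorem stmt8 : ∀ c : Fin 4 → Fin 6, (aMat.submatrix id c).det = 0 := by
  intro c
  set M := aMat.submatrix id c with hM
  have hu : Matrix.vecMul uVec M = 0 := by
    funext j
    have hk := key (c j)
    simp only [hM, Matrix.vecMul, dotProduct, Fin.sum_univ_four,
      Matrix.submatrix_apply, id, uVec, Matrix.cons_val_zero, Matrix.cons_val_one,
      Matrix.head_cons, Matrix.cons_val_two, Matrix.cons_val_three,
      Matrix.tail_cons, Pi.zero_apply]
    exact hk
  have h2 : Matrix.vecMul uVec (M * M.adjugate) = 0 := by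
    rw [← Matrix.vecMul_vecMul, hu]
    funext j
    simp [Matrix.vecMul, dotProduct]
  rw [Matrix.mul_adjugate] at h2
  have h3 : M.det * uVec 0 = 0 := by
    have h4 := congrFun h2 0
    simpa [Matrix.vecMul, dotProduct, Matrix.smul_apply, Matrix.one_apply,
      Fin.sum_univ_four, mul_comm] using h4
  rcases mul_eq_zero.mp h3 with h | h
  · exact h
  · exact absurd h uVec_zero_ne

end
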